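/- Let α ∈ [0,1], n ≥ 2, and let a_0, …, a_n be independent real-valued random variables with P(a_i > 0) = α and P(a_i < 0) = 1 − α for every i. Then for every integer k ≥ 0, the probability p_{k,n} of exactly k sign changes satisfies the recursion p_{k,n} = α(1−α)·(p_{k−2,n−2} − p_{k,n−2}) + p_{k,n−1}, with the convention that p_{j,N} = 0 for j < 0. -/

import Mathlib

open MeasureTheory ProbabilityTheory

/-- Number of sign changes of the sequence `a 0, a 1, …, a N` (there are `N`
consecutive pairs): the number of indices `0 ≤ i ≤ N - 1` with `a i * a (i+1) < 0`. -/
noncomputable def signChanges {Ω : Type*} (a : ℕ → Ω → ℝ) (N : ℕ) (ω : Ω) : ℕ :=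
  ((Finset.range N).filter fun i => a i ω * a (i + 1) ω < 0).card

/-- `p k N`: the probability that `(a 0, …, a N)` has exactly `k` sign changes. -/
noncomputable def signChangeProb {Ω : Type*} [MeasurableSpace Ω] (μ : Measure Ω)
    (a : ℕ → Ω → ℝ) (k N : ℕ) : ℝ :=
  (μ {ω | signChanges a N ω = k}).toReal


set_option maxRecDepth 4000 in
lemma signChanges_succ {Ω : Type*} (a : ℕ → Ω → ℝ) (N : ℕ) (ω : Ω) :
    signChanges a (N + 1) ω =
      signChanges a N ω + if a N ω * a (N + 1) ω < 0 then 1 else 0 := by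
  classical
  unfold signChanges
  rw [Finset.range_add_one, Finset.filter_insert]
  split
  · rw [Finset.card_insert_of_notMem (by simp)]
  · simp

/-- The event of exactly `j` sign changes (integer-indexed, empty for `j < 0`). -/
def SC {Ω : Type*} (a : ℕ → Ω → ℝ) (j : ℤ) (N : ℕ) : Set Ω :=
  {ω | (signChanges a N ω : ℤ) = j}

def posSet {Ω : Type*} (a : ℕ → Ω → ℝ) (i : ℕ) : Set Ω := {ω | 0 < a i ω}
def negSet {Ω : Type*} (a : ℕ → Ω → ℝ) (i : ℕ) : Set Ω := {ω | a i ω < 0}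

@[simp] lemma mem_SC {Ω : Type*} {a : ℕ → Ω → ℝ} {j : ℤ} {N : ℕ} {ω : Ω} :
    ω ∈ SC a j N ↔ (signChanges a N ω : ℤ) = j := Iff.rfl
@[simp] lemma mem_posSet {Ω : Type*} {a : ℕ → Ω → ℝ} {i : ℕ} {ω : Ω} :
    ω ∈ posSet a i ↔ 0 < a i ω := Iff.rfl
@[simp] lemma mem_negSet {Ω : Type*} {a : ℕ → Ω → ℝ} {i : ℕ} {ω : Ω} :
    ω ∈ negSet a i ↔ a i ω < 0 := Iff.rfl

lemma SC_split {Ω : Type*} (a : ℕ → Ω → ℝ) (j : ℤ) (N : ℕ) :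
    SC a j (N + 1) =
      (SC a j N ∩ {ω | ¬ a N ω * a (N + 1) ω < 0}) ∪
      (SC a (j - 1) N ∩ {ω | a N ω * a (N + 1) ω < 0}) := by
  ext ω
  simp only [mem_SC, Set.mem_union, Set.mem_inter_iff, Set.mem_setOf_eq, signChanges_succ a N ω]
  by_cases h : a N ω * a (N + 1) ω < 0
  · simp only [h, if_true, not_true_eq_false, and_false, false_or, and_true]
    push_cast
    omega
  · simp only [h, if_false, not_false_eq_true, and_true, and_false, or_false]
    push_cast
    omega

lemma mulneg_split {Ω : Type*} (a : ℕ → Ω → ℝ) (N : ℕ) :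
    {ω | a N ω * a (N + 1) ω < 0} =
      (posSet a N ∩ negSet a (N + 1)) ∪ (negSet a N ∩ posSet a (N + 1)) := by
  ext ω
  simp only [Set.mem_setOf_eq, Set.mem_union, Set.mem_inter_iff, mem_posSet, mem_negSet]
  exact mul_neg_iff

lemma SC_pos_split {Ω : Type*} (a : ℕ → Ω → ℝ) (j : ℤ) (N : ℕ) :
    (SC a j (N + 1) ∩ posSet a (N + 1)) ∩ {ω | a N ω ≠ 0} =
      ((SC a j N ∩ posSet a N ∩ posSet a (N + 1)) ∪
        (SC a (j - 1) N ∩ negSet a N ∩ posSet a (N + 1))) ∩ {ω | a N ω ≠ 0} := by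
  ext ω
  simp only [Set.mem_inter_iff, Set.mem_union, mem_SC, mem_posSet, mem_negSet,
    Set.mem_setOf_eq, signChanges_succ a N ω]
  constructor
  · rintro ⟨⟨hc, hp⟩, hne⟩
    refine ⟨?_, hne⟩
    rcases hne.lt_or_gt with hlt | hgt
    · right
      rw [if_pos (mul_neg_of_neg_of_pos hlt hp)] at hc
      push_cast at hc
      exact ⟨⟨by omega, hlt⟩, hp⟩
    · left
      rw [if_neg (not_lt.mpr (mul_pos hgt hp).le)] at hc
      push_cast at hc
      exact ⟨⟨by omega, hgt⟩, hp⟩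
  · rintro ⟨⟨⟨hc, hgt⟩, hp⟩ | ⟨⟨hc, hlt⟩, hp⟩, hne⟩
    · refine ⟨⟨?_, hp⟩, hne⟩
      rw [if_neg (not_lt.mpr (mul_pos hgt hp).le)]
      push_cast
      omega
    · refine ⟨⟨?_, hp⟩, hne⟩
      rw [if_pos (mul_neg_of_neg_of_pos hlt hp)]
      push_cast
      omega

lemma SC_neg_split {Ω : Type*} (a : ℕ → Ω → ℝ) (j : ℤ) (N : ℕ) :
    (SC a j (N + 1) ∩ negSet a (N + 1)) ∩ {ω | a N ω ≠ 0} =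
      ((SC a j N ∩ negSet a N ∩ negSet a (N + 1)) ∪
        (SC a (j - 1) N ∩ posSet a N ∩ negSet a (N + 1))) ∩ {ω | a N ω ≠ 0} := by
  ext ω
  simp only [Set.mem_inter_iff, Set.mem_union, mem_SC, mem_posSet, mem_negSet,
    Set.mem_setOf_eq, signChanges_succ a N ω]
  constructor
  · rintro ⟨⟨hc, hp⟩, hne⟩
    refine ⟨?_, hne⟩
    rcases hne.lt_or_gt with hlt | hgt
    · left
      rw [if_neg (not_lt.mpr (mul_pos_of_neg_of_neg hlt hp).le)] at hc
      push_cast at hc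
      exact ⟨⟨by omega, hlt⟩, hp⟩
    · right
      rw [if_pos (mul_neg_of_pos_of_neg hgt hp)] at hc
      push_cast at hc
      exact ⟨⟨by omega, hgt⟩, hp⟩
  · rintro ⟨⟨⟨hc, hlt⟩, hp⟩ | ⟨⟨hc, hgt⟩, hp⟩, hne⟩
    · refine ⟨⟨?_, hp⟩, hne⟩
      rw [if_neg (not_lt.mpr (mul_pos_of_neg_of_neg hlt hp).le)]
      push_cast
      omega
    · refine ⟨⟨?_, hp⟩, hne⟩
      rw [if_pos (mul_neg_of_pos_of_neg hgt hp)]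
      push_cast
      omega

lemma SC_parts {Ω : Type*} (a : ℕ → Ω → ℝ) (j : ℤ) (N : ℕ) (i : ℕ) :
    SC a j N ∩ {ω | a i ω ≠ 0} =
      ((SC a j N ∩ posSet a i) ∪ (SC a j N ∩ negSet a i)) ∩ {ω | a i ω ≠ 0} := by
  ext ω
  simp only [Set.mem_inter_iff, Set.mem_union, mem_SC, mem_posSet, mem_negSet, Set.mem_setOf_eq]
  constructor
  · rintro ⟨hc, hne⟩
    rcases hne.lt_or_gt with hlt | hgt
    · exact ⟨Or.inr ⟨hc, hlt⟩, hne⟩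
    · exact ⟨Or.inl ⟨hc, hgt⟩, hne⟩
  · rintro ⟨h, hne⟩
    exact ⟨h.elim And.left And.left, hne⟩

set_option maxRecDepth 4000 in
lemma measurable_signChanges {Ω : Type*} {M : MeasurableSpace Ω} {a : ℕ → Ω → ℝ} {N : ℕ}
    (h : ∀ i ≤ N, Measurable[M] (a i)) : Measurable[M] (signChanges a N) := by
  classical
  have : signChanges a N = fun ω =>
      ∑ i ∈ Finset.range N, if a i ω * a (i + 1) ω < 0 then 1 else 0 := by
    funext ω
    rw [signChanges, Finset.card_filter]
  rw [this]
  refine Finset.measurable_sum _ fun i hi => ?_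
  have hi' : i < N := Finset.mem_range.mp hi
  exact Measurable.ite
    (measurableSet_lt (((h i (by omega)).mul (h (i+1) (by omega)))) measurable_const)
    measurable_const measurable_const

lemma measurableSet_SC {Ω : Type*} {M : MeasurableSpace Ω} {a : ℕ → Ω → ℝ} {N : ℕ}
    (h : ∀ i ≤ N, Measurable[M] (a i)) (j : ℤ) : MeasurableSet[M] (SC a j N) :=
  measurable_signChanges h (Set.to_countable {x : ℕ | (x : ℤ) = j}).measurableSet

lemma indep_helper {Ω : Type*} [MeasurableSpace Ω] {μ : Measure Ω} {n : ℕ} {a : ℕ → Ω → ℝ}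
    (hmeas : ∀ i, Measurable (a i))
    (hindep : iIndepFun (fun i : Fin (n + 1) => a i) μ)
    {j : ℕ} (hj : j ≤ n) {A : Set Ω}
    (hA : MeasurableSet[⨆ i ∈ Finset.range j, MeasurableSpace.comap (a i) inferInstance] A)
    {B : Set ℝ} (hB : MeasurableSet B) :
    μ (A ∩ a j ⁻¹' B) = μ A * μ (a j ⁻¹' B) := by
  classical
  set jF : Fin (n + 1) := ⟨j, by omega⟩ with hjF
  set Sf : Finset (Fin (n + 1)) := Finset.univ.filter (fun i => (i : ℕ) < j) with hSf
  have hdisj : Disjoint Sf {jF} := by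
    rw [Finset.disjoint_singleton_right]
    simp [hSf, hjF]
  have hIF := hindep.indepFun_finset Sf {jF} hdisj (fun i => hmeas i)
  set X : Ω → ({ x // x ∈ Sf } → ℝ) := fun ω i => a i ω with hX
  set Y : Ω → ({ x // x ∈ ({jF} : Finset (Fin (n+1))) } → ℝ) := fun ω i => a i ω with hY
  have hle : (⨆ i ∈ Finset.range j, MeasurableSpace.comap (a i) inferInstance) ≤
      MeasurableSpace.comap X MeasurableSpace.pi := by
    refine iSup₂_le fun i hi => ?_
    have hij : i < j := Finset.mem_range.mp hi
    have hmem : (⟨i, by omega⟩ : Fin (n + 1)) ∈ Sf := by simp [hSf, hij]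
    have hcomp : a i = (fun v : { x // x ∈ Sf } → ℝ => v ⟨⟨i, by omega⟩, hmem⟩) ∘ X := rfl
    rw [hcomp, ← MeasurableSpace.comap_comp]
    exact MeasurableSpace.comap_mono (measurable_pi_apply _).comap_le
  have hA' : MeasurableSet[MeasurableSpace.comap X MeasurableSpace.pi] A := hle A hA
  obtain ⟨s, hs, hXs⟩ := hA'
  have hYB : a j ⁻¹' B = Y ⁻¹' ((fun v => v ⟨jF, Finset.mem_singleton_self jF⟩) ⁻¹' B) := rfl
  rw [← hXs, hYB]
  exact (indepFun_iff_measure_inter_preimage_eq_mul.mp hIF) s _ hs ((measurable_pi_apply _) hB)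

/-- Second-order recursion for the sign-change probabilities:
`p_{k,n} = α(1−α)·(p_{k−2,n−2} − p_{k,n−2}) + p_{k,n−1}`
(with the convention `p_{j,·} = 0` for `j < 0`). -/
theorem prob_signChanges_recursion
    {Ω : Type*} [MeasurableSpace Ω] (μ : Measure Ω) [IsProbabilityMeasure μ]
    (n : ℕ) (hn : 2 ≤ n) (α : ℝ) (hα : α ∈ Set.Icc (0 : ℝ) 1) (a : ℕ → Ω → ℝ)
    (hmeas : ∀ i, Measurable (a i))
    (hindep : iIndepFun
      (fun i : Fin (n + 1) => a i) μ)
    (hpos : ∀ i ≤ n, μ {ω | 0 < a i ω} = ENNReal.ofReal α)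
    (hneg : ∀ i ≤ n, μ {ω | a i ω < 0} = ENNReal.ofReal (1 - α)) :
    ∀ k : ℕ,
      signChangeProb μ a k n =
        α * (1 - α) * ((if k < 2 then 0 else signChangeProb μ a (k - 2) (n - 2)) -
          signChangeProb μ a k (n - 2)) + signChangeProb μ a k (n - 1) := by
  classical
  intro k
  obtain ⟨m, rfl⟩ : ∃ m, n = m + 2 := ⟨n - 2, by omega⟩
  -- basic measurability facts
  have hSm : ∀ (j : ℤ) (N : ℕ), MeasurableSet (SC a j N) := fun j N =>
    measurableSet_SC (fun i _ => hmeas i) j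
  have hPm : ∀ i, MeasurableSet (posSet a i) :=
    fun i => measurableSet_lt measurable_const (hmeas i)
  have hNm : ∀ i, MeasurableSet (negSet a i) :=
    fun i => measurableSet_lt (hmeas i) measurable_const
  have hfin : ∀ A : Set Ω, μ A ≠ ⊤ := fun A => measure_ne_top μ A
  have h1α : (0:ℝ) ≤ 1 - α := by linarith [hα.2]
  have hposE : ∀ i, i ≤ m + 2 → μ (posSet a i) = ENNReal.ofReal α := fun i hi => hpos i hi
  have hnegE : ∀ i, i ≤ m + 2 → μ (negSet a i) = ENNReal.ofReal (1 - α) := fun i hi => hneg i hi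
  -- rewrite the goal in terms of `SC`
  have hcast : ∀ (j N : ℕ), signChangeProb μ a j N = (μ (SC a (j : ℤ) N)).toReal := by
    intro j N
    have hset : {ω | signChanges a N ω = j} = SC a (j : ℤ) N := by
      ext ω
      simp [SC]
    unfold signChangeProb
    rw [hset]
  simp only [show m + 2 - 2 = m from rfl, show m + 2 - 1 = m + 1 from rfl]
  rw [hcast k (m+2), hcast k (m+1), hcast k m]
  have hif : (if k < 2 then (0:ℝ) else signChangeProb μ a (k - 2) m)
      = (μ (SC a ((k:ℤ) - 2) m)).toReal := by
    split
    · next h =>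
      have he : SC a ((k:ℤ) - 2) m = ∅ := by
        ext ω
        simp only [mem_SC, Set.mem_empty_iff_false, iff_false]
        omega
      rw [he]
      simp
    · next h =>
      rw [hcast, show ((k - 2 : ℕ) : ℤ) = (k:ℤ) - 2 from by omega]
  rw [hif]
  rw [show (μ (SC a (k:ℤ) (m+2))).toReal = (μ (SC a (k:ℤ) (m+1+1))).toReal from rfl]
  -- null sets
  have hzero : ∀ i, i ≤ m + 2 → μ {ω | a i ω = 0} = 0 := by
    intro i hi
    have hd : Disjoint (posSet a i) (negSet a i) :=
      Set.disjoint_left.mpr fun ω h h' => absurd (mem_negSet.mp h') (not_lt.mpr (mem_posSet.mp h).le)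
    have hdu : μ (posSet a i ∪ negSet a i) = 1 := by
      rw [measure_union hd (hNm i), hposE i hi, hnegE i hi,
        ← ENNReal.ofReal_add hα.1 h1α]
      norm_num
    have hcompl : {ω | a i ω = 0} = (posSet a i ∪ negSet a i)ᶜ := by
      ext ω
      simp only [Set.mem_setOf_eq, Set.mem_compl_iff, Set.mem_union, mem_posSet, mem_negSet,
        not_or, not_lt]
      constructor
      · intro h
        exact ⟨h.le, h.ge⟩
      · rintro ⟨h1, h2⟩
        exact le_antisymm h1 h2
    rw [hcompl, prob_compl_eq_one_sub ((hPm i).union (hNm i)), hdu, tsub_self]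
  have hmuEq : ∀ (i : ℕ), i ≤ m + 2 → ∀ A B : Set Ω,
      A ∩ {ω | a i ω ≠ 0} = B ∩ {ω | a i ω ≠ 0} → μ A = μ B := by
    intro i hi A B h
    have hnull : μ {ω | a i ω ≠ 0}ᶜ = 0 := by
      have he : {ω | a i ω ≠ 0}ᶜ = {ω | a i ω = 0} := by
        ext ω
        simp
      rw [he]
      exact hzero i hi
    have key : ∀ X : Set Ω, μ (X ∩ {ω | a i ω ≠ 0}) = μ X := fun X => by
      rw [show X ∩ {ω | a i ω ≠ 0} = X \ {ω | a i ω ≠ 0}ᶜ from (Set.diff_compl).symm]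
      exact measure_diff_null hnull
    rw [← key A, h, key B]
  -- measurability w.r.t. the sub-σ-algebras generated by initial segments
  have haM : ∀ (J i : ℕ), i < J →
      Measurable[⨆ i ∈ Finset.range J, MeasurableSpace.comap (a i) inferInstance] (a i) := by
    intro J i hi
    refine measurable_iff_comap_le.mpr ?_
    exact le_biSup (fun i => MeasurableSpace.comap (a i) inferInstance)
      (Finset.mem_range.mpr hi)
  have hSM : ∀ (J N : ℕ), N < J → ∀ j : ℤ,
      MeasurableSet[⨆ i ∈ Finset.range J, MeasurableSpace.comap (a i) inferInstance]
        (SC a j N) :=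
    fun J N hNJ j => measurableSet_SC (fun i hi => haM J i (by omega)) j
  have hPM : ∀ (J i : ℕ), i < J →
      MeasurableSet[⨆ i ∈ Finset.range J, MeasurableSpace.comap (a i) inferInstance]
        (posSet a i) :=
    fun J i hi => measurableSet_lt measurable_const (haM J i hi)
  have hNgM : ∀ (J i : ℕ), i < J →
      MeasurableSet[⨆ i ∈ Finset.range J, MeasurableSpace.comap (a i) inferInstance]
        (negSet a i) :=
    fun J i hi => measurableSet_lt (haM J i hi) measurable_const
  have hind : ∀ (j : ℕ), j ≤ m + 2 → ∀ A : Set Ω,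
      MeasurableSet[⨆ i ∈ Finset.range j, MeasurableSpace.comap (a i) inferInstance] A →
      ∀ B : Set ℝ, MeasurableSet B → μ (A ∩ a j ⁻¹' B) = μ A * μ (a j ⁻¹' B) :=
    fun j hj A hA B hB => indep_helper hmeas hindep hj hA hB
  -- Step B: one-step conditioning on the sign of `a (m+1)`
  have hqP : ∀ j : ℤ, μ (SC a j (m+1) ∩ posSet a (m+1)) =
      (μ (SC a j m ∩ posSet a m) + μ (SC a (j-1) m ∩ negSet a m)) * ENNReal.ofReal α := by
    intro j
    have h1 : μ (SC a j (m+1) ∩ posSet a (m+1)) =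
        μ ((SC a j m ∩ posSet a m ∩ posSet a (m+1)) ∪
           (SC a (j-1) m ∩ negSet a m ∩ posSet a (m+1))) :=
      hmuEq m (by omega) _ _ (SC_pos_split a j m)
    rw [h1, measure_union
        (Set.disjoint_left.mpr (by
          rintro ω ⟨⟨-, h1⟩, -⟩ ⟨⟨-, h2⟩, -⟩
          exact absurd (mem_negSet.mp h2) (not_lt.mpr (mem_posSet.mp h1).le)))
        (((hSm _ _).inter (hNm m)).inter (hPm (m+1)))]
    rw [show SC a j m ∩ posSet a m ∩ posSet a (m+1)
        = (SC a j m ∩ posSet a m) ∩ a (m+1) ⁻¹' Set.Ioi 0 from rfl,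
      show SC a (j-1) m ∩ negSet a m ∩ posSet a (m+1)
        = (SC a (j-1) m ∩ negSet a m) ∩ a (m+1) ⁻¹' Set.Ioi 0 from rfl,
      hind (m+1) (by omega) _ ((hSM (m+1) m (by omega) j).inter (hPM (m+1) m (by omega)))
        _ measurableSet_Ioi,
      hind (m+1) (by omega) _ ((hSM (m+1) m (by omega) (j-1)).inter (hNgM (m+1) m (by omega)))
        _ measurableSet_Ioi,
      show a (m+1) ⁻¹' Set.Ioi 0 = posSet a (m+1) from rfl, hposE (m+1) (by omega), add_mul]
  have hqN : ∀ j : ℤ, μ (SC a j (m+1) ∩ negSet a (m+1)) =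
      (μ (SC a j m ∩ negSet a m) + μ (SC a (j-1) m ∩ posSet a m)) * ENNReal.ofReal (1-α) := by
    intro j
    have h1 : μ (SC a j (m+1) ∩ negSet a (m+1)) =
        μ ((SC a j m ∩ negSet a m ∩ negSet a (m+1)) ∪
           (SC a (j-1) m ∩ posSet a m ∩ negSet a (m+1))) :=
      hmuEq m (by omega) _ _ (SC_neg_split a j m)
    rw [h1, measure_union
        (Set.disjoint_left.mpr (by
          rintro ω ⟨⟨-, h1⟩, -⟩ ⟨⟨-, h2⟩, -⟩
          exact absurd (mem_negSet.mp h1) (not_lt.mpr (mem_posSet.mp h2).le)))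
        (((hSm _ _).inter (hPm m)).inter (hNm (m+1)))]
    rw [show SC a j m ∩ negSet a m ∩ negSet a (m+1)
        = (SC a j m ∩ negSet a m) ∩ a (m+1) ⁻¹' Set.Iio 0 from rfl,
      show SC a (j-1) m ∩ posSet a m ∩ negSet a (m+1)
        = (SC a (j-1) m ∩ posSet a m) ∩ a (m+1) ⁻¹' Set.Iio 0 from rfl,
      hind (m+1) (by omega) _ ((hSM (m+1) m (by omega) j).inter (hNgM (m+1) m (by omega)))
        _ measurableSet_Iio,
      hind (m+1) (by omega) _ ((hSM (m+1) m (by omega) (j-1)).inter (hPM (m+1) m (by omega)))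
        _ measurableSet_Iio,
      show a (m+1) ⁻¹' Set.Iio 0 = negSet a (m+1) from rfl, hnegE (m+1) (by omega), add_mul]
  -- Step A: conditioning on the sign of `a (m+2)`, split of the "change at the last pair" event
  have hrE : ∀ j : ℤ, μ (SC a j (m+1) ∩ {ω | a (m+1) ω * a (m+1+1) ω < 0}) =
      μ (SC a j (m+1) ∩ posSet a (m+1)) * ENNReal.ofReal (1-α)
      + μ (SC a j (m+1) ∩ negSet a (m+1)) * ENNReal.ofReal α := by
    intro j
    rw [mulneg_split a (m+1), Set.inter_union_distrib_left, measure_union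
        (Set.disjoint_left.mpr (by
          rintro ω ⟨-, h1, -⟩ ⟨-, h2, -⟩
          exact absurd (mem_negSet.mp h2) (not_lt.mpr (mem_posSet.mp h1).le)))
        ((hSm _ _).inter ((hNm (m+1)).inter (hPm (m+1+1))))]
    rw [show SC a j (m+1) ∩ (posSet a (m+1) ∩ negSet a (m+1+1))
        = (SC a j (m+1) ∩ posSet a (m+1)) ∩ a (m+1+1) ⁻¹' Set.Iio 0 from by
          rw [Set.inter_assoc]; rfl,
      show SC a j (m+1) ∩ (negSet a (m+1) ∩ posSet a (m+1+1))
        = (SC a j (m+1) ∩ negSet a (m+1)) ∩ a (m+1+1) ⁻¹' Set.Ioi 0 from by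
          rw [Set.inter_assoc]; rfl,
      hind (m+1+1) (by omega) _
        ((hSM (m+1+1) (m+1) (by omega) j).inter (hPM (m+1+1) (m+1) (by omega)))
        _ measurableSet_Iio,
      hind (m+1+1) (by omega) _
        ((hSM (m+1+1) (m+1) (by omega) j).inter (hNgM (m+1+1) (m+1) (by omega)))
        _ measurableSet_Ioi,
      show a (m+1+1) ⁻¹' Set.Iio 0 = negSet a (m+1+1) from rfl,
      show a (m+1+1) ⁻¹' Set.Ioi 0 = posSet a (m+1+1) from rfl,
      hposE (m+1+1) (by omega), hnegE (m+1+1) (by omega)]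
  -- splitting the count at the last pair
  have hEm : MeasurableSet {ω | a (m+1) ω * a (m+1+1) ω < 0} :=
    measurableSet_lt ((hmeas _).mul (hmeas _)) measurable_const
  have e1e : μ (SC a (k:ℤ) (m+1+1)) =
      μ (SC a (k:ℤ) (m+1) ∩ {ω | ¬ a (m+1) ω * a (m+1+1) ω < 0})
      + μ (SC a ((k:ℤ)-1) (m+1) ∩ {ω | a (m+1) ω * a (m+1+1) ω < 0}) := by
    rw [SC_split a k (m+1)]
    exact measure_union (Set.disjoint_left.mpr (by
        rintro ω ⟨-, h1⟩ ⟨-, h2⟩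
        exact h1 h2))
      ((hSm _ _).inter hEm)
  have e2e : μ (SC a (k:ℤ) (m+1)) =
      μ (SC a (k:ℤ) (m+1) ∩ {ω | ¬ a (m+1) ω * a (m+1+1) ω < 0})
      + μ (SC a (k:ℤ) (m+1) ∩ {ω | a (m+1) ω * a (m+1+1) ω < 0}) := by
    have hu : SC a (k:ℤ) (m+1) =
        (SC a (k:ℤ) (m+1) ∩ {ω | ¬ a (m+1) ω * a (m+1+1) ω < 0})
        ∪ (SC a (k:ℤ) (m+1) ∩ {ω | a (m+1) ω * a (m+1+1) ω < 0}) := by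
      ext ω
      by_cases h : a (m+1) ω * a (m+1+1) ω < 0 <;>
        simp only [Set.mem_union, Set.mem_inter_iff, Set.mem_setOf_eq] <;> tauto
    rw [← measure_union (Set.disjoint_left.mpr (by
        rintro ω ⟨-, h1⟩ ⟨-, h2⟩
        exact h1 h2))
      ((hSm _ _).inter hEm), ← hu]
  -- decomposition by the sign of `a m`
  have hpm : ∀ j : ℤ, μ (SC a j m) =
      μ (SC a j m ∩ posSet a m) + μ (SC a j m ∩ negSet a m) := by
    intro j
    have h1 : μ (SC a j m) = μ ((SC a j m ∩ posSet a m) ∪ (SC a j m ∩ negSet a m)) :=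
      hmuEq m (by omega) _ _ (SC_parts a j m m)
    rw [h1, measure_union
      (Set.disjoint_left.mpr (by
        rintro ω ⟨-, h1'⟩ ⟨-, h2'⟩
        exact absurd (mem_negSet.mp h2') (not_lt.mpr (mem_posSet.mp h1').le)))
      ((hSm _ _).inter (hNm m))]
  -- pass to real numbers
  have e1r : (μ (SC a (k:ℤ) (m+1+1))).toReal =
      (μ (SC a (k:ℤ) (m+1) ∩ {ω | ¬ a (m+1) ω * a (m+1+1) ω < 0})).toReal
      + (μ (SC a ((k:ℤ)-1) (m+1) ∩ {ω | a (m+1) ω * a (m+1+1) ω < 0})).toReal := by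
    rw [e1e]
    exact ENNReal.toReal_add (hfin _) (hfin _)
  have e2r : (μ (SC a (k:ℤ) (m+1))).toReal =
      (μ (SC a (k:ℤ) (m+1) ∩ {ω | ¬ a (m+1) ω * a (m+1+1) ω < 0})).toReal
      + (μ (SC a (k:ℤ) (m+1) ∩ {ω | a (m+1) ω * a (m+1+1) ω < 0})).toReal := by
    rw [e2e]
    exact ENNReal.toReal_add (hfin _) (hfin _)
  have hpr : ∀ j : ℤ, (μ (SC a j m)).toReal =
      (μ (SC a j m ∩ posSet a m)).toReal + (μ (SC a j m ∩ negSet a m)).toReal := by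
    intro j
    rw [hpm j]
    exact ENNReal.toReal_add (hfin _) (hfin _)
  have hrR : ∀ j : ℤ, (μ (SC a j (m+1) ∩ {ω | a (m+1) ω * a (m+1+1) ω < 0})).toReal =
      α * (1-α) * ((μ (SC a j m)).toReal + (μ (SC a (j-1) m)).toReal) := by
    intro j
    have h1 := hrE j
    rw [hqP j, hqN j] at h1
    have h2 := congrArg ENNReal.toReal h1
    rw [ENNReal.toReal_add
        (ENNReal.mul_ne_top (ENNReal.mul_ne_top (ENNReal.add_ne_top.mpr ⟨hfin _, hfin _⟩)
          ENNReal.ofReal_ne_top) ENNReal.ofReal_ne_top)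
        (ENNReal.mul_ne_top (ENNReal.mul_ne_top (ENNReal.add_ne_top.mpr ⟨hfin _, hfin _⟩)
          ENNReal.ofReal_ne_top) ENNReal.ofReal_ne_top)] at h2
    simp only [ENNReal.toReal_mul, ENNReal.toReal_ofReal hα.1,
      ENNReal.toReal_ofReal h1α] at h2
    rw [ENNReal.toReal_add (hfin _) (hfin _), ENNReal.toReal_add (hfin _) (hfin _)] at h2
    have hj := hpr j
    have hj1 := hpr (j-1)
    linear_combination h2 - α * (1-α) * hj - α * (1-α) * hj1
  have hrk1 := hrR ((k:ℤ) - 1)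
  rw [show (k:ℤ) - 1 - 1 = (k:ℤ) - 2 from by ring] at hrk1
  linear_combination e1r - e2r + hrk1 - hrR (k:ℤ)
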